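/- Let X be a complex Banach space and T : X → X, S : X* → X* bijective linear maps such that (Sf)(Tx) = λ f(x) for all x ∈ X, f ∈ X* and some fixed nonzero scalar λ. Then T and S are bounded, and S = λ (T*)⁻¹ where T* is the Banach-space adjoint of T. -/

import Mathlib

theorem stmt19 {X : Type*} [NormedAddCommGroup X] [NormedSpace ℂ X]
    [CompleteSpace X]
    (T : X →ₗ[ℂ] X) (S : (X →L[ℂ] ℂ) →ₗ[ℂ] (X →L[ℂ] ℂ))
    (hT : Function.Bijective T) (hS : Function.Bijective S)
    (lam : ℂ) (hlam : lam ≠ 0)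
    (h : ∀ (x : X) (f : X →L[ℂ] ℂ), S f (T x) = lam * f x) :
    Continuous T ∧ Continuous S ∧
      ∃ T' : X ≃L[ℂ] X, (∀ x, T' x = T x) ∧
        ∀ f : X →L[ℂ] ℂ, S f = lam • f.comp (T'.symm : X →L[ℂ] X) := by
  -- characterization of the graph
  have key : ∀ x y : X, (∀ f : X →L[ℂ] ℂ, S f y = lam * f x) ↔ y = T x := by
    intro x y
    constructor
    · intro hxy
      rw [NormedSpace.eq_iff_forall_dual_eq ℂ]
      intro g
      obtain ⟨f, rfl⟩ := hS.surjective g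
      rw [hxy f, h x f]
    · rintro rfl f; exact h x f
  -- closed graph
  have hgraph : IsClosed (T.graph : Set (X × X)) := by
    have : (T.graph : Set (X × X)) =
        ⋂ f : X →L[ℂ] ℂ, {p : X × X | S f p.2 = lam * f p.1} := by
      ext ⟨x, y⟩
      simp only [SetLike.mem_coe, LinearMap.mem_graph_iff, Set.mem_iInter, Set.mem_setOf_eq]
      exact (key x y).symm
    rw [this]
    exact isClosed_iInter fun f =>
      isClosed_eq ((S f).continuous.comp continuous_snd)
        (continuous_const.mul ((f.continuous.comp continuous_fst)))
  have hTc : Continuous T := T.continuous_of_isClosed_graph hgraph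
  -- continuous linear equiv
  let Tc : X →L[ℂ] X := ⟨T, hTc⟩
  have hker : Tc.ker = ⊥ := by
    exact LinearMap.ker_eq_bot.mpr hT.injective
  have hrange : Tc.range = ⊤ := by
    exact LinearMap.range_eq_top.mpr hT.surjective
  let T' : X ≃L[ℂ] X := ContinuousLinearEquiv.ofBijective Tc hker hrange
  have hT'coe : ∀ x, T' x = T x := fun x => rfl
  have hformula : ∀ f : X →L[ℂ] ℂ, S f = lam • f.comp (T'.symm : X →L[ℂ] X) := by
    intro f
    ext y
    have := h (T'.symm y) f
    rw [show T (T'.symm y) = y from (hT'coe (T'.symm y)).symm.trans (T'.apply_symm_apply y)]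
      at this
    simpa using this
  have hSc : Continuous S := by
    have : (⇑S) = fun f : X →L[ℂ] ℂ =>
        lam • f.comp (T'.symm : X →L[ℂ] X) := funext hformula
    rw [this]
    exact (continuous_const (y := lam)).smul
      (((ContinuousLinearMap.compL ℂ X X ℂ).flip (T'.symm : X →L[ℂ] X)).continuous)
  exact ⟨hTc, hSc, T', hT'coe, hformula⟩
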